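/- Every diagonalizable linear subspace of Mat_2(K) of dimension 3 is conjugate to the subspace S_2(K) of 2×2 symmetric matrices; that is, there exists P ∈ GL_2(K) with V = P·S_2(K)·P^{-1}. -/

import Mathlib

open Matrix
def IsDiagonalizable {K : Type*} [Field K] {m : Type*} [Fintype m] [DecidableEq m]
    (A : Matrix m m K) : Prop :=
  ∃ P : Matrix m m K, IsUnit P ∧ (P⁻¹ * A * P).IsDiag
def FormallyReal (K : Type*) [Field K] : Prop := ¬ IsSumSq (-1 : K)
def Pythagorean (K : Type*) [Field K] : Prop := ∀ a b : K, ∃ c : K, a ^ 2 + b ^ 2 = c ^ 2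

lemma diag_key {K : Type*} [Field K] (A : Matrix (Fin 2) (Fin 2) K)
    (h : IsDiagonalizable A) :
    ∃ x y : K, A.trace = x + y ∧ A.det = x * y ∧ (x = y → A = x • 1) := by
  obtain ⟨P, hP, hD⟩ := h
  set D := P⁻¹ * A * P with hDdef
  have hPdet : IsUnit P.det := (Matrix.isUnit_iff_isUnit_det P).mp hP
  have hA : A = P * D * P⁻¹ := by
    rw [hDdef, Matrix.mul_assoc, Matrix.mul_assoc, Matrix.mul_nonsing_inv _ hPdet,
      Matrix.mul_one, ← Matrix.mul_assoc, Matrix.mul_nonsing_inv _ hPdet, Matrix.one_mul]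
  refine ⟨D 0 0, D 1 1, ?_, ?_, ?_⟩
  · rw [hA, Matrix.trace_mul_comm, ← Matrix.mul_assoc, Matrix.nonsing_inv_mul _ hPdet,
      Matrix.one_mul, Matrix.trace_fin_two]
  · rw [hA, Matrix.det_mul, Matrix.det_mul, mul_comm, ← mul_assoc, ← Matrix.det_mul,
      Matrix.nonsing_inv_mul _ hPdet, Matrix.det_one, one_mul, Matrix.det_fin_two,
      hD (by decide : (0:Fin 2) ≠ 1), zero_mul, sub_zero]
  · intro hxy
    have hDeq : D = (D 0 0) • (1 : Matrix (Fin 2) (Fin 2) K) := by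
      ext i j
      fin_cases i <;> fin_cases j <;>
        simp [hD (by decide : (0:Fin 2) ≠ 1), hD (by decide : (1:Fin 2) ≠ 0), hxy.symm,
          Matrix.one_apply]
    rw [hA, hDeq]
    rw [Matrix.mul_smul, Matrix.mul_one, Matrix.smul_mul, Matrix.mul_nonsing_inv _ hPdet]
    simp [Matrix.one_apply]

lemma mat_decomp {K : Type*} [Field K] (a b c e : K) :
    !![a, b; c, e] = a • Matrix.single 0 0 (1:K) + b • Matrix.single 0 1 1
      + c • Matrix.single 1 0 1 + e • Matrix.single 1 1 1 := by
  ext i j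
  fin_cases i <;> fin_cases j <;> simp [Matrix.single]

lemma phi_eval {K : Type*} [Field K] (φ : Module.Dual K (Matrix (Fin 2) (Fin 2) K))
    (a b c e : K) :
    φ !![a, b; c, e] = a * φ (Matrix.single 0 0 1) + b * φ (Matrix.single 0 1 1)
      + c * φ (Matrix.single 1 0 1) + e * φ (Matrix.single 1 1 1) := by
  rw [mat_decomp]
  simp only [map_add, _root_.map_smul, smul_eq_mul]


lemma zero_sum_prod {K : Type*} [Field K] {x y : K} (h1 : (0:K) = x + y)
    (h2 : (0:K) = x * y) : x = 0 ∧ x = y := by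
  have hsq : (x - y) * (x - y) = 0 := by linear_combination (-(x+y)) * h1 + 4 * h2
  have hxy : x = y := sub_eq_zero.mp (mul_self_eq_zero.mp hsq)
  rw [← hxy] at h2
  exact ⟨mul_self_eq_zero.mp h2.symm, hxy⟩

theorem stmt4 {K : Type*} [Field K]
    (V : Submodule K (Matrix (Fin 2) (Fin 2) K))
    (hV : ∀ A ∈ V, IsDiagonalizable A)
    (hdim : Module.finrank K V = 3) :
    ∃ P : Matrix (Fin 2) (Fin 2) K, IsUnit P ∧
      (V : Set (Matrix (Fin 2) (Fin 2) K)) = (fun S => P * S * P⁻¹) '' {S | S.IsSymm} := by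
  classical
  -- Step 1: V is the kernel of a nonzero functional φ
  obtain ⟨φ, hφ0, hVker⟩ :
      ∃ f : Module.Dual K (Matrix (Fin 2) (Fin 2) K), f ≠ 0 ∧ V = LinearMap.ker f := by
    have hfr : Module.finrank K (Matrix (Fin 2) (Fin 2) K) = 4 := by
      simp [Module.finrank_matrix]
    have hlt : V < ⊤ := by
      rcases lt_or_eq_of_le (le_top (a := V)) with h | h
      · exact h
      · exfalso; rw [h] at hdim; rw [finrank_top] at hdim; omega
    obtain ⟨f, hf0, hfmap⟩ := V.exists_dual_map_eq_bot_of_lt_top hlt inferInstance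
    refine ⟨f, hf0, ?_⟩
    have hle : V ≤ LinearMap.ker f := by
      intro x hx
      simp only [LinearMap.mem_ker]
      have : f x ∈ V.map f := ⟨x, hx, rfl⟩
      rwa [hfmap, Submodule.mem_bot] at this
    refine Submodule.eq_of_le_of_finrank_eq hle ?_
    have hrn := LinearMap.finrank_range_add_finrank_ker f
    have hrange : Module.finrank K (LinearMap.range f) = 1 := by
      have : LinearMap.range f = ⊤ := by
        rw [LinearMap.range_eq_top]
        intro y
        obtain ⟨x, hx⟩ : ∃ x, f x ≠ 0 := by
          by_contra h; push_neg at h; exact hf0 (by ext x; simp [h])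
        exact ⟨(y / f x) • x, by rw [_root_.map_smul, smul_eq_mul, div_mul_cancel₀ y hx]⟩
      rw [this, finrank_top, Module.finrank_self]
    rw [hrange, hfr] at hrn
    rw [hdim]
    omega
  set p := φ (Matrix.single 0 0 1) with hp
  set r := φ (Matrix.single 0 1 1) with hr
  set q := φ (Matrix.single 1 0 1) with hq
  set s := φ (Matrix.single 1 1 1) with hs
  have hmem : ∀ a b c e : K, (!![a, b; c, e] ∈ V ↔ p * a + r * b + q * c + s * e = 0) := by
    intro a b c e
    rw [hVker, LinearMap.mem_ker, phi_eval]
    constructor <;> intro h <;> linear_combination h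
  -- helper to use diagonalizability
  have hdg : ∀ a b c e : K, p * a + r * b + q * c + s * e = 0 →
      ∃ x y : K, a + e = x + y ∧ a * e - b * c = x * y ∧ (x = y → !![a, b; c, e] = x • 1) := by
    intro a b c e hin
    obtain ⟨x, y, h1, h2, h3⟩ := diag_key _ (hV _ ((hmem a b c e).mpr hin))
    refine ⟨x, y, ?_, ?_, h3⟩
    · rwa [Matrix.trace_fin_two_of] at h1
    · rwa [Matrix.det_fin_two_of] at h2
  -- Step B: r ≠ 0 and q ≠ 0
  have hr0 : r ≠ 0 := by
    intro h0
    obtain ⟨x, y, h1, h2, h3⟩ := hdg 0 1 0 0 (by rw [h0]; ring)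
    obtain ⟨hx0, hxy⟩ := zero_sum_prod (x := x) (y := y) (by linear_combination h1) (by linear_combination h2)
    have := congrFun (congrFun (h3 hxy) 0) 1
    rw [hx0] at this
    simp at this
  have hq0 : q ≠ 0 := by
    intro h0
    obtain ⟨x, y, h1, h2, h3⟩ := hdg 0 0 1 0 (by rw [h0]; ring)
    obtain ⟨hx0, hxy⟩ := zero_sum_prod (x := x) (y := y) (by linear_combination h1) (by linear_combination h2)
    have := congrFun (congrFun (h3 hxy) 1) 0
    rw [hx0] at this
    simp at this
  -- Step A: s = -p
  have hsp : s = -p := by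
    by_contra hne
    have hts : p + s ≠ 0 := fun h => hne (by linear_combination h)
    set l : K := -r / (p + s) with hl
    obtain ⟨x, y, h1, h2, h3⟩ := hdg l 1 0 l (by rw [hl]; field_simp; ring)
    have hsq : (x - y) * (x - y) = 0 := by
      linear_combination (-(x+y) - (l+l)) * h1 + 4 * h2
    have hxy : x = y := sub_eq_zero.mp (mul_self_eq_zero.mp hsq)
    have := congrFun (congrFun (h3 hxy) 0) 1
    simp [Matrix.one_apply] at this
  -- Step C: -(p^2 + q*r) is a nonzero square
  obtain ⟨d, hd0, hd⟩ : ∃ d : K, d ≠ 0 ∧ p * p + q * r + d * d = 0 := by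
    obtain ⟨x, y, h1, h2, h3⟩ := hdg (p*q) (q*q) (-(2*p*p + q*r)) (-(p*q))
      (by rw [hsp]; ring)
    have h1' : (0:K) = x + y := by linear_combination h1
    have hxx : x * x = -(q * q * (p * p + q * r)) := by
      linear_combination h2 - x * h1'
    have hx0 : x ≠ 0 := by
      intro h
      have hy : y = 0 := by rw [h] at h1'; linear_combination -h1'
      have hxy : x = y := by rw [h, hy]
      have := congrFun (congrFun (h3 hxy) 0) 1
      rw [h] at this
      simp at this
      exact hq0 this
    refine ⟨x / q, div_ne_zero hx0 hq0, ?_⟩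
    field_simp
    linear_combination hxx
  -- Final construction
  set P : Matrix (Fin 2) (Fin 2) K := !![1, p/d; 0, r/d] with hPdef
  set Q : Matrix (Fin 2) (Fin 2) K := !![1, -(p/r); 0, d/r] with hQdef
  have hPQ : P * Q = 1 := by
    ext i j
    fin_cases i <;> fin_cases j <;>
      simp [hPdef, hQdef, Matrix.mul_apply, Fin.sum_univ_two, Matrix.one_apply] <;>
      field_simp <;> ring
  have hQP : Q * P = 1 := by
    ext i j
    fin_cases i <;> fin_cases j <;>
      simp [hPdef, hQdef, Matrix.mul_apply, Fin.sum_univ_two, Matrix.one_apply] <;>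
      field_simp <;> ring
  have hPunit : IsUnit P := by
    rw [Matrix.isUnit_iff_isUnit_det, hPdef, Matrix.det_fin_two_of, isUnit_iff_ne_zero]
    intro h
    apply hr0
    have : (1:K) * (r/d) = 0 := by linear_combination h
    rw [one_mul, div_eq_zero_iff] at this
    tauto
  have hPinv : P⁻¹ = Q := Matrix.inv_eq_right_inv hPQ
  have hmem' : ∀ A : Matrix (Fin 2) (Fin 2) K,
      (A ∈ V ↔ p * A 0 0 + r * A 0 1 + q * A 1 0 + s * A 1 1 = 0) := by
    intro A
    have := hmem (A 0 0) (A 0 1) (A 1 0) (A 1 1)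
    rwa [← Matrix.eta_fin_two A] at this
  have hSdiff : ∀ A : Matrix (Fin 2) (Fin 2) K,
      (Q * A * P) 0 1 - (Q * A * P) 1 0 =
        (p * A 0 0 + r * A 0 1 + q * A 1 0 + s * A 1 1) / d := by
    intro A
    simp only [hQdef, hPdef, Matrix.mul_apply, Fin.sum_univ_two]
    simp
    rw [hsp]
    field_simp
    linear_combination (-(A 1 0)) * hd
  have hmem'' : ∀ A : Matrix (Fin 2) (Fin 2) K,
      (A ∈ V ↔ (Q * A * P) 0 1 = (Q * A * P) 1 0) := by
    intro A
    rw [hmem' A, ← sub_eq_zero (a := (Q * A * P) 0 1), hSdiff A, div_eq_zero_iff]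
    constructor
    · intro h; left; exact h
    · intro h; rcases h with h | h
      · exact h
      · exact absurd h hd0
  refine ⟨P, hPunit, ?_⟩
  ext A
  simp only [SetLike.mem_coe, Set.mem_image, Set.mem_setOf_eq]
  constructor
  · intro hA
    refine ⟨Q * A * P, ?_, ?_⟩
    · have h := (hmem'' A).mp hA
      rw [Matrix.IsSymm]
      ext i j
      fin_cases i <;> fin_cases j <;> simp [Matrix.transpose_apply, h]
    · rw [hPinv]
      have hassoc : P * (Q * A * P) * Q = (P * Q) * A * (P * Q) := by
        simp only [Matrix.mul_assoc]
      rw [hassoc, hPQ, Matrix.one_mul, Matrix.mul_one]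
  · rintro ⟨S, hS, rfl⟩
    rw [hPinv]
    rw [hmem'']
    have hassoc : Q * (P * S * Q) * P = (Q * P) * S * (Q * P) := by
      simp only [Matrix.mul_assoc]
    rw [hassoc, hQP, Matrix.one_mul, Matrix.mul_one]
    have h2 := congrFun (congrFun hS 0) 1
    rw [Matrix.transpose_apply] at h2
    exact h2.symm
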